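/- Let M > 0, k, p ∈ ℝ⁴, and fix a coordinate index μ. Then q ↦ q_μ/((‖q‖²+M²)(‖q-k‖²+M²)(‖q+p‖²+M²)) is Lebesgue integrable on ℝ⁴ and ∫_{ℝ⁴} q_μ dq / ((‖q‖²+M²)(‖q-k‖²+M²)(‖q+p‖²+M²)) = π² ∫_0^1 dβ₁ ∫_0^{1-β₁} dβ₂ of (β₂k - β₃p)_μ/(β₁β₂‖k‖² + β₁β₃‖p‖² + β₂β₃‖k+p‖² + M²) with β₃ = 1-β₁-β₂. -/

import Mathlib

open MeasureTheory Real Set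

local notation "E4" => EuclideanSpace ℝ (Fin 4)

lemma aux_lb (c : E4) {Δ : ℝ} (hΔ : 0 < Δ) (q : E4) :
    min 1 Δ / (2*(1+‖c‖)^2) * (1+‖q‖)^2 ≤ ‖q-c‖^2 + Δ := by
  have hc : (0:ℝ) < 1 + ‖c‖ := by positivity
  have h1 : (1+‖q‖) ≤ (1+‖c‖)*(1+‖q-c‖) := by
    have := norm_sub_norm_le q c
    nlinarith [norm_nonneg c, norm_nonneg (q-c)]
  have h2 : (1+‖q-c‖)^2 ≤ 2*(1+‖q-c‖^2) := by nlinarith [sq_nonneg (1-‖q-c‖)]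
  have h3 : min 1 Δ * (1+‖q-c‖^2) ≤ ‖q-c‖^2 + Δ := by
    have := min_le_left (1:ℝ) Δ; have := min_le_right (1:ℝ) Δ
    nlinarith [sq_nonneg ‖q-c‖, lt_min one_pos hΔ]
  have h4 : (1+‖q‖)^2 ≤ (1+‖c‖)^2*(1+‖q-c‖)^2 := by
    rw [← mul_pow]; exact pow_le_pow_left₀ (by positivity) h1 2
  have hm : (0:ℝ) < min 1 Δ := lt_min one_pos hΔ
  rw [div_mul_eq_mul_div, div_le_iff₀ (by positivity)]
  calc min 1 Δ * (1+‖q‖)^2 ≤ min 1 Δ * ((1+‖c‖)^2*(2*(1+‖q-c‖^2))) := by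
        apply mul_le_mul_of_nonneg_left _ hm.le
        calc (1+‖q‖)^2 ≤ (1+‖c‖)^2*(1+‖q-c‖)^2 := h4
          _ ≤ (1+‖c‖)^2*(2*(1+‖q-c‖^2)) := by
              apply mul_le_mul_of_nonneg_left h2 (by positivity)
    _ = (min 1 Δ * (1+‖q-c‖^2)) * (2*(1+‖c‖)^2) := by ring
    _ ≤ (‖q-c‖^2 + Δ) * (2*(1+‖c‖)^2) := by
        apply mul_le_mul_of_nonneg_right h3 (by positivity)

lemma integrable_decay5 : Integrable (fun q : E4 => (1+‖q‖)^(-(5:ℝ))) := by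
  apply integrable_one_add_norm (by norm_num [finrank_euclideanSpace])

lemma decay_bound {t ε₁ ε₂ ε₃ A B C num : ℝ} (ht : 1 ≤ t)
    (h₁ : 0<ε₁) (h₂ : 0<ε₂) (h₃ : 0<ε₃)
    (hA : ε₁*t^2 ≤ A) (hB : ε₂*t^2 ≤ B) (hC : ε₃*t^2 ≤ C)
    (hnum : |num| ≤ t) : |num/(A*B*C)| ≤ (ε₁*ε₂*ε₃)⁻¹ / t^5 := by
  have ht0 : 0 < t := lt_of_lt_of_le one_pos ht
  have hA0 : 0 < A := lt_of_lt_of_le (by positivity) hA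
  have hB0 : 0 < B := lt_of_lt_of_le (by positivity) hB
  have hC0 : 0 < C := lt_of_lt_of_le (by positivity) hC
  have hprod : ε₁*ε₂*ε₃*t^6 ≤ A*B*C := by
    calc ε₁*ε₂*ε₃*t^6 = ((ε₁*t^2)*(ε₂*t^2))*(ε₃*t^2) := by ring
      _ ≤ (A*B)*C := by
          apply mul_le_mul (mul_le_mul hA hB (by positivity) hA0.le) hC (by positivity)
            (by positivity)
  have : |num/(A*B*C)| = |num|/(A*B*C) := by
    rw [abs_div, abs_of_pos (show (0:ℝ) < A*B*C by positivity)]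
  rw [this]
  calc |num|/(A*B*C) ≤ t/(ε₁*ε₂*ε₃*t^6) := by
        exact div_le_div₀ ht0.le hnum (by positivity) hprod
    _ = (ε₁*ε₂*ε₃)⁻¹ / t^5 := by field_simp

lemma integrable_of_decay {f : EuclideanSpace ℝ (Fin 4) → ℝ}
    (hf : AEStronglyMeasurable f volume) {C : ℝ}
    (h : ∀ q, |f q| ≤ C / (1+‖q‖)^5) : Integrable f := by
  apply (integrable_decay5.const_mul C).mono' hf
  filter_upwards with q
  have h1 : (0:ℝ) < 1 + ‖q‖ := by positivity
  have : (1+‖q‖)^(-(5:ℝ)) = ((1+‖q‖)^(5:ℕ))⁻¹ := by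
    rw [Real.rpow_neg h1.le, ← Real.rpow_natCast (1+‖q‖) 5]; norm_num
  rw [Real.norm_eq_abs, this, ← div_eq_mul_inv]
  exact h q

lemma coord_le_norm (x : EuclideanSpace ℝ (Fin 4)) (i : Fin 4) : |x i| ≤ ‖x‖ := by
  rw [EuclideanSpace.norm_eq]
  have h1 : |x i| = Real.sqrt (‖x i‖^2) := by
    rw [Real.sqrt_sq_eq_abs, Real.norm_eq_abs, abs_abs]
  rw [h1]
  apply Real.sqrt_le_sqrt
  exact Finset.single_le_sum (f := fun j => ‖x j‖^2) (fun j _ => by positivity)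
    (Finset.mem_univ i)

lemma cont_den (c : EuclideanSpace ℝ (Fin 4)) (Δ : ℝ) :
    Continuous (fun q : EuclideanSpace ℝ (Fin 4) => ‖q-c‖^2+Δ) := by fun_prop

lemma integrable_num_single (c : EuclideanSpace ℝ (Fin 4)) {Δ : ℝ} (hΔ : 0 < Δ)
    {f : EuclideanSpace ℝ (Fin 4) → ℝ} (hfc : Continuous f)
    (hb : ∀ q, |f q| ≤ 1+‖q‖) :
    Integrable (fun q : EuclideanSpace ℝ (Fin 4) => f q / (‖q-c‖^2+Δ)^3) := by
  set ε : ℝ := min 1 Δ / (2*(1+‖c‖)^2) with hε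
  have hε0 : 0 < ε := by
    have := lt_min one_pos hΔ; positivity
  apply integrable_of_decay (C := (ε*ε*ε)⁻¹)
  · apply Continuous.aestronglyMeasurable
    apply hfc.div ((cont_den c Δ).pow 3)
    intro q; show (‖q-c‖^2+Δ)^3 ≠ 0; positivity
  · intro q
    have h3 : (‖q-c‖^2+Δ)^3 = (‖q-c‖^2+Δ)*(‖q-c‖^2+Δ)*(‖q-c‖^2+Δ) := by ring
    rw [h3]
    exact decay_bound (by simp [norm_nonneg]) hε0 hε0 hε0 (aux_lb c hΔ q) (aux_lb c hΔ q)
      (aux_lb c hΔ q) (hb q)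

lemma integrable_coord_single (c : EuclideanSpace ℝ (Fin 4)) {Δ : ℝ} (hΔ : 0 < Δ) (i : Fin 4) :
    Integrable (fun q : EuclideanSpace ℝ (Fin 4) => q i / (‖q-c‖^2+Δ)^3) := by
  apply integrable_num_single c hΔ (EuclideanSpace.proj i).continuous
  intro q
  exact (coord_le_norm q i).trans (by linarith [norm_nonneg q])

lemma integrable_one_single (c : EuclideanSpace ℝ (Fin 4)) {Δ : ℝ} (hΔ : 0 < Δ) :
    Integrable (fun q : EuclideanSpace ℝ (Fin 4) => ((‖q-c‖^2+Δ)^3)⁻¹) := by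
  have := integrable_num_single c hΔ continuous_const (f := fun _ => (1:ℝ))
    (by intro q; rw [abs_one]; linarith [norm_nonneg q])
  simpa [one_div] using this

lemma integrable_F (M : ℝ) (hM : 0 < M) (k p : EuclideanSpace ℝ (Fin 4)) (i : Fin 4) :
    Integrable (fun q : EuclideanSpace ℝ (Fin 4) =>
      q i / ((‖q‖ ^ 2 + M ^ 2) * (‖q - k‖ ^ 2 + M ^ 2) * (‖q + p‖ ^ 2 + M ^ 2))) := by
  have hM2 : (0:ℝ) < M^2 := by positivity
  set ε₁ : ℝ := min 1 (M^2) / (2*(1+‖(0:EuclideanSpace ℝ (Fin 4))‖)^2) with hε₁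
  set ε₂ : ℝ := min 1 (M^2) / (2*(1+‖k‖)^2) with hε₂
  set ε₃ : ℝ := min 1 (M^2) / (2*(1+‖(-p : EuclideanSpace ℝ (Fin 4))‖)^2) with hε₃
  have hm := lt_min one_pos hM2
  have h₁ : 0 < ε₁ := by positivity
  have h₂ : 0 < ε₂ := by positivity
  have h₃ : 0 < ε₃ := by positivity
  apply integrable_of_decay (C := (ε₁*ε₂*ε₃)⁻¹)
  · apply Continuous.aestronglyMeasurable
    apply (EuclideanSpace.proj i).continuous.div
    · fun_prop
    · intro q; positivity
  · intro q
    have e1 : ε₁*(1+‖q‖)^2 ≤ ‖q‖^2 + M^2 := by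
      have := aux_lb (0:EuclideanSpace ℝ (Fin 4)) hM2 q
      rwa [sub_zero] at this
    have e2 : ε₂*(1+‖q‖)^2 ≤ ‖q-k‖^2 + M^2 := aux_lb k hM2 q
    have e3 : ε₃*(1+‖q‖)^2 ≤ ‖q+p‖^2 + M^2 := by
      have := aux_lb (-p) hM2 q
      rwa [sub_neg_eq_add] at this
    exact decay_bound (by linarith [norm_nonneg q]) h₁ h₂ h₃ e1 e2 e3
      ((coord_le_norm q i).trans (by linarith [norm_nonneg q]))

lemma oneD_integral {Δ : ℝ} (hΔ : 0 < Δ) :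
    ∫ y in Ioi (0:ℝ), y^3 * ((y^2+Δ)^3)⁻¹ = 1/(4*Δ) := by
  set g : ℝ → ℝ := fun y => -(1/2) * (y^2+Δ)⁻¹ + (Δ/4) * (((y^2+Δ)^2)⁻¹) with hg
  have hden : ∀ y : ℝ, (0:ℝ) < y^2+Δ := fun y => by positivity
  have hderiv : ∀ y ∈ Ici (0:ℝ), HasDerivAt g (y^3 * ((y^2+Δ)^3)⁻¹) y := by
    intro y _
    have hu : HasDerivAt (fun y : ℝ => y^2+Δ) (2*y) y := by
      simpa using (hasDerivAt_pow 2 y).add_const Δ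
    have h1 : HasDerivAt (fun y : ℝ => (y^2+Δ)⁻¹) (-(2*y)/(y^2+Δ)^2) y :=
      hu.inv (hden y).ne'
    have hu2 : HasDerivAt (fun y : ℝ => (y^2+Δ)^2) (2*(y^2+Δ)*(2*y)) y := by
      simpa using (hu.fun_pow 2)
    have h2 : HasDerivAt (fun y : ℝ => ((y^2+Δ)^2)⁻¹)
        (-(2*(y^2+Δ)*(2*y))/((y^2+Δ)^2)^2) y := hu2.inv (by positivity)
    have := (h1.const_mul (-(1/2):ℝ)).add (h2.const_mul (Δ/4))
    refine this.congr_deriv ?_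
    have h0 := (hden y).ne'
    field_simp
    ring
  have htend : Filter.Tendsto g Filter.atTop (nhds 0) := by
    have hb : Filter.Tendsto (fun y : ℝ => y^2+Δ) Filter.atTop Filter.atTop :=
      Filter.tendsto_atTop_add_const_right _ Δ (Filter.tendsto_pow_atTop (by norm_num) : Filter.Tendsto (fun y:ℝ => y^2) Filter.atTop Filter.atTop)
    have i1 : Filter.Tendsto (fun y : ℝ => (y^2+Δ)⁻¹) Filter.atTop (nhds 0) :=
      hb.inv_tendsto_atTop
    have i2 : Filter.Tendsto (fun y : ℝ => ((y^2+Δ)^2)⁻¹) Filter.atTop (nhds 0) :=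
      (hb.atTop_mul_atTop₀ hb).inv_tendsto_atTop |>.congr (fun y => by
        show ((y^2+Δ)*(y^2+Δ))⁻¹ = ((y^2+Δ)^2)⁻¹; ring_nf)
    have h := ((i1.const_mul (-(1/2):ℝ)).add (i2.const_mul (Δ/4)))
    rw [hg]
    convert h using 2 <;> norm_num
  have := integral_Ioi_of_hasDerivAt_of_nonneg' hderiv
    (fun x hx => by have hx' : (0:ℝ) < x := hx; positivity) htend
  rw [this, hg]
  have h0 := hΔ.ne'
  field_simp
  ring

lemma ball_vol : (volume (Metric.ball (0:EuclideanSpace ℝ (Fin 4)) 1)).toReal = π^2/2 := by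
  rw [EuclideanSpace.volume_ball]
  have hcard : Fintype.card (Fin 4) = 4 := by simp
  rw [hcard]
  have hG : Real.Gamma ((4:ℕ)/2+1) = 2 := by
    have : ((4:ℕ):ℝ)/2+1 = ((2:ℕ):ℝ)+1 := by norm_num
    rw [this, Real.Gamma_nat_eq_factorial]; norm_num
  have hs : Real.sqrt π ^ 4 = π^2 := by
    have : Real.sqrt π ^ 4 = (Real.sqrt π ^ 2)^2 := by ring
    rw [this, Real.sq_sqrt pi_nonneg]
  norm_num at hG ⊢
  rw [hs, ENNReal.toReal_ofReal (by positivity)]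

lemma radial_integral {Δ : ℝ} (hΔ : 0 < Δ) :
    ∫ q : EuclideanSpace ℝ (Fin 4), ((‖q‖^2+Δ)^3)⁻¹ = π^2/(2*Δ) := by
  have h := MeasureTheory.integral_fun_norm_addHaar (volume : Measure (EuclideanSpace ℝ (Fin 4)))
    (fun y => ((y^2+Δ)^3)⁻¹)
  simp only [finrank_euclideanSpace, Fintype.card_fin] at h
  rw [h, measureReal_def, ball_vol, nsmul_eq_mul, smul_eq_mul]
  have : ∫ y in Ioi (0:ℝ), y ^ (4-1) • ((y^2+Δ)^3)⁻¹ = 1/(4*Δ) := by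
    rw [← oneD_integral hΔ]
    apply setIntegral_congr_fun measurableSet_Ioi
    intro y _; norm_num
  rw [this]
  field_simp
  ring

lemma odd_integral {Δ : ℝ} (i : Fin 4) :
    ∫ q : EuclideanSpace ℝ (Fin 4), q i * ((‖q‖^2+Δ)^3)⁻¹ = 0 := by
  have h := MeasureTheory.integral_neg_eq_self
    (fun q : EuclideanSpace ℝ (Fin 4) => q i * ((‖q‖^2+Δ)^3)⁻¹) volume
  have h2 : ∀ q : EuclideanSpace ℝ (Fin 4),
      (-q) i * ((‖-q‖^2+Δ)^3)⁻¹ = -(q i * ((‖q‖^2+Δ)^3)⁻¹) := by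
    intro q; rw [norm_neg]; simp
  simp only [h2] at h
  rw [MeasureTheory.integral_neg] at h
  linarith

lemma shifted_integral (c : EuclideanSpace ℝ (Fin 4)) {Δ : ℝ} (hΔ : 0 < Δ) (i : Fin 4) :
    ∫ q : EuclideanSpace ℝ (Fin 4), q i * ((‖q-c‖^2+Δ)^3)⁻¹ = c i * (π^2/(2*Δ)) := by
  have h := MeasureTheory.integral_add_right_eq_self
    (μ := volume) (fun q : EuclideanSpace ℝ (Fin 4) => q i * ((‖q-c‖^2+Δ)^3)⁻¹) c
  rw [← h]
  have h2 : ∀ q : EuclideanSpace ℝ (Fin 4),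
      (q+c) i * ((‖q+c-c‖^2+Δ)^3)⁻¹ = q i * ((‖q‖^2+Δ)^3)⁻¹ + c i * ((‖q‖^2+Δ)^3)⁻¹ := by
    intro q
    rw [add_sub_cancel_right]
    have : (q+c) i = q i + c i := rfl
    rw [this]; ring
  simp only [h2]
  have i1 : Integrable (fun q : EuclideanSpace ℝ (Fin 4) => q i * ((‖q‖^2+Δ)^3)⁻¹) := by
    have := integrable_coord_single 0 hΔ i
    simp only [sub_zero, div_eq_mul_inv] at this
    exact this
  have i2 : Integrable (fun q : EuclideanSpace ℝ (Fin 4) => c i * ((‖q‖^2+Δ)^3)⁻¹) := by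
    have := (integrable_one_single 0 hΔ).const_mul (c i)
    simpa only [sub_zero] using this
  rw [MeasureTheory.integral_add i1 i2, odd_integral i, MeasureTheory.integral_const_mul,
    radial_integral hΔ, zero_add]

lemma lin_pos {X A x : ℝ} (hX : 0 < X) (hA : 0 < A) (hx : 0 ≤ x) (hx1 : x ≤ 1) :
    0 < X + x*(A-X) := by
  set m := min X A with hm
  have hm0 : 0 < m := lt_min hX hA
  have e1 : (1-x)*m ≤ (1-x)*X := mul_le_mul_of_nonneg_left (min_le_left _ _) (by linarith)
  have e2 : x*m ≤ x*A := mul_le_mul_of_nonneg_left (min_le_right _ _) hx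
  have key : (1-x)*m + x*m = m := by ring
  nlinarith

lemma den_pos {A B C x y : ℝ} (hA : 0<A) (hB : 0<B) (hC : 0<C)
    (hx : 0 ≤ x) (hy : 0 ≤ y) (hxy : x+y ≤ 1) : 0 < x*A+y*B+(1-x-y)*C := by
  set m := min A (min B C) with hm
  have hm0 : 0 < m := lt_min hA (lt_min hB hC)
  have e1 : x*m ≤ x*A := mul_le_mul_of_nonneg_left (min_le_left _ _) hx
  have e2 : y*m ≤ y*B := mul_le_mul_of_nonneg_left
    ((min_le_right _ _).trans (min_le_left _ _)) hy
  have e3 : (1-x-y)*m ≤ (1-x-y)*C := mul_le_mul_of_nonneg_left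
    ((min_le_right _ _).trans (min_le_right _ _)) (by linarith)
  have key : x*m + y*m + (1-x-y)*m = m := by ring
  nlinarith

lemma lemJ {A X : ℝ} (hA : 0 < A) (hX : 0 < X) :
    ∫ x in (0:ℝ)..1, ((X + x*(A-X))^2)⁻¹ = (A*X)⁻¹ := by
  have hpos : ∀ x ∈ Set.uIcc (0:ℝ) 1, 0 < X + x*(A-X) := by
    intro x hx
    rw [Set.uIcc_of_le zero_le_one] at hx
    exact lin_pos hX hA hx.1 hx.2
  by_cases hAX : A = X
  · rw [intervalIntegral.integral_congr (g := fun _ => (X^2)⁻¹)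
      (fun x _ => by rw [hAX]; ring_nf)]
    rw [intervalIntegral.integral_const, hAX]
    simp [smul_eq_mul, sq]
  · have hne : A - X ≠ 0 := sub_ne_zero.mpr hAX
    set φ : ℝ → ℝ := fun x => (-(A-X)⁻¹) * (X+x*(A-X))⁻¹ with hφ
    have hder : ∀ x ∈ Set.uIcc (0:ℝ) 1, HasDerivAt φ (((X + x*(A-X))^2)⁻¹) x := by
      intro x hx
      have hu : HasDerivAt (fun x : ℝ => X + x*(A-X)) (A-X) x := by
        simpa using (hasDerivAt_mul_const (A-X)).const_add X
      have := (hu.inv (hpos x hx).ne').const_mul (-(A-X)⁻¹)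
      refine this.congr_deriv ?_
      field_simp
    have hcont : IntervalIntegrable (fun x : ℝ => ((X + x*(A-X))^2)⁻¹) volume 0 1 := by
      apply ContinuousOn.intervalIntegrable
      apply ContinuousOn.inv₀ (by fun_prop)
      intro x hx
      exact (pow_pos (hpos x hx) 2).ne'
    rw [intervalIntegral.integral_eq_sub_of_hasDerivAt hder hcont, hφ]
    have h1 : X + 1*(A-X) = A := by ring
    have h0 : X + 0*(A-X) = X := by ring
    simp only [h1, h0]
    field_simp
    ring

lemma lemJ2 {A B : ℝ} (hA : 0 < A) (hB : 0 < B) :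
    ∫ x in (0:ℝ)..1, 2*(1-x) * ((B + x*(A-B))^3)⁻¹ = (A*B^2)⁻¹ := by
  have hpos : ∀ x ∈ Set.uIcc (0:ℝ) 1, 0 < B + x*(A-B) := by
    intro x hx
    rw [Set.uIcc_of_le zero_le_one] at hx
    exact lin_pos hB hA hx.1 hx.2
  by_cases hAB : A = B
  · set ψ : ℝ → ℝ := fun x => (2*x - x^2) * (B^3)⁻¹ with hψ
    have hder : ∀ x ∈ Set.uIcc (0:ℝ) 1, HasDerivAt ψ (2*(1-x) * ((B + x*(A-B))^3)⁻¹) x := by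
      intro x _
      have h1 : HasDerivAt (fun x : ℝ => 2*x - x^2) (2 - 2*x) x := by
        simpa using ((hasDerivAt_id x).const_mul 2).fun_sub (hasDerivAt_pow 2 x)
      have := h1.mul_const ((B^3)⁻¹)
      refine this.congr_deriv ?_
      rw [hAB]
      ring_nf
    have hcont : IntervalIntegrable (fun x : ℝ => 2*(1-x)*((B + x*(A-B))^3)⁻¹) volume 0 1 := by
      apply ContinuousOn.intervalIntegrable
      apply ContinuousOn.mul (by fun_prop)
      apply ContinuousOn.inv₀ (by fun_prop)
      intro x hx
      exact (pow_pos (hpos x hx) 3).ne'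
    rw [intervalIntegral.integral_eq_sub_of_hasDerivAt hder hcont, hψ, hAB]
    norm_num
    field_simp
  · have hne : A - B ≠ 0 := sub_ne_zero.mpr hAB
    set e := A - B with he
    set ψ : ℝ → ℝ := fun x => (-(e^2)⁻¹*A) * ((B+x*e)^2)⁻¹ + (2*(e^2)⁻¹) * (B+x*e)⁻¹ with hψ
    have hder : ∀ x ∈ Set.uIcc (0:ℝ) 1, HasDerivAt ψ (2*(1-x) * ((B + x*e)^3)⁻¹) x := by
      intro x hx
      have hfx : 0 < B + x*e := hpos x hx
      have hu : HasDerivAt (fun x : ℝ => B + x*e) e x := by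
        simpa using (hasDerivAt_mul_const e).const_add B
      have h2 : HasDerivAt (fun x : ℝ => (B+x*e)^2) (2*(B+x*e)*e) x := by
        have := hu.fun_pow 2
        refine this.congr_deriv ?_; ring
      have hinv2 := (h2.inv (by positivity)).const_mul (-(e^2)⁻¹*A)
      have hinv1 := (hu.inv hfx.ne').const_mul (2*(e^2)⁻¹)
      have := hinv2.add hinv1
      refine this.congr_deriv ?_
      field_simp
      ring
    have hcont : IntervalIntegrable (fun x : ℝ => 2*(1-x)*((B + x*e)^3)⁻¹) volume 0 1 := by
      apply ContinuousOn.intervalIntegrable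
      apply ContinuousOn.mul (by fun_prop)
      apply ContinuousOn.inv₀ (by fun_prop)
      intro x hx
      exact (pow_pos (hpos x hx) 3).ne'
    rw [intervalIntegral.integral_eq_sub_of_hasDerivAt hder hcont, hψ]
    have h1 : B + 1*e = A := by rw [he]; ring
    have h0 : B + 0*e = B := by ring
    simp only [h1, h0]
    field_simp
    ring

lemma cube_int {c0 d L : ℝ} (hL : 0 ≤ L)
    (hpos : ∀ y ∈ Icc (0:ℝ) L, 0 < c0 + y*d) (hd : d ≠ 0) :
    ∫ y in (0:ℝ)..L, 2*((c0+y*d)^3)⁻¹ = d⁻¹ * ((c0^2)⁻¹ - ((c0+L*d)^2)⁻¹) := by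
  have hpos' : ∀ y ∈ Set.uIcc (0:ℝ) L, 0 < c0 + y*d := by
    intro y hy; exact hpos y (by rwa [Set.uIcc_of_le hL] at hy)
  set Φ : ℝ → ℝ := fun y => (-(d)⁻¹) * ((c0+y*d)^2)⁻¹ with hΦ
  have hder : ∀ y ∈ Set.uIcc (0:ℝ) L, HasDerivAt Φ (2*((c0+y*d)^3)⁻¹) y := by
    intro y hy
    have hu : HasDerivAt (fun y : ℝ => c0 + y*d) d y := by
      simpa using (hasDerivAt_mul_const d).const_add c0
    have h2 : HasDerivAt (fun y : ℝ => (c0+y*d)^2) (2*(c0+y*d)*d) y := by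
      have := hu.fun_pow 2
      refine this.congr_deriv ?_; ring
    have := (h2.inv (pow_pos (hpos' y hy) 2).ne').const_mul (-(d)⁻¹)
    refine this.congr_deriv ?_
    have h0 := (hpos' y hy).ne'
    field_simp
  have hcont : IntervalIntegrable (fun y : ℝ => 2*((c0+y*d)^3)⁻¹) volume 0 L := by
    apply ContinuousOn.intervalIntegrable
    apply ContinuousOn.mul continuousOn_const
    apply ContinuousOn.inv₀ (by fun_prop)
    intro y hy
    exact (pow_pos (hpos' y hy) 3).ne'
  rw [intervalIntegral.integral_eq_sub_of_hasDerivAt hder hcont]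
  show (-(d)⁻¹) * ((c0+L*d)^2)⁻¹ - (-(d)⁻¹) * ((c0+0*d)^2)⁻¹ = _
  have h0 : c0 + 0*d = c0 := by ring
  rw [h0]
  ring

lemma inner_eqBC {A C x : ℝ} :
    ∫ y in (0:ℝ)..(1-x), 2*((x*A+y*C+(1-x-y)*C)^3)⁻¹ = 2*(1-x)*((C+x*(A-C))^3)⁻¹ := by
  rw [intervalIntegral.integral_congr (g := fun _ => 2*((C+x*(A-C))^3)⁻¹)
    (fun y _ => by ring_nf)]
  rw [intervalIntegral.integral_const, smul_eq_mul]
  ring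

lemma inner_neqBC {A B C x : ℝ} (hA : 0<A) (hB : 0<B) (hC : 0<C) (hBC : B ≠ C)
    (hx : 0 ≤ x) (hx1 : x ≤ 1) :
    ∫ y in (0:ℝ)..(1-x), 2*((x*A+y*B+(1-x-y)*C)^3)⁻¹ =
      (B-C)⁻¹ * (((C+x*(A-C))^2)⁻¹ - ((B+x*(A-B))^2)⁻¹) := by
  set c0 := x*A+(1-x)*C with hc0
  have hcong : ∫ y in (0:ℝ)..(1-x), 2*((x*A+y*B+(1-x-y)*C)^3)⁻¹
      = ∫ y in (0:ℝ)..(1-x), 2*((c0+y*(B-C))^3)⁻¹ :=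
    intervalIntegral.integral_congr (fun y _ => by rw [hc0]; ring_nf)
  rw [hcong, cube_int (by linarith) ?hp (sub_ne_zero.mpr hBC)]
  · have e1 : c0 = C+x*(A-C) := by rw [hc0]; ring
    have e2 : c0 + (1-x)*(B-C) = B+x*(A-B) := by rw [hc0]; ring
    rw [e2, e1]
  · intro y hy
    have : c0 + y*(B-C) = x*A+y*B+(1-x-y)*C := by rw [hc0]; ring
    rw [this]
    exact den_pos hA hB hC hx hy.1 (by linarith [hy.2])

lemma feynman {A B C : ℝ} (hA : 0<A) (hB : 0<B) (hC : 0<C) :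
    ∫ x in (0:ℝ)..1, ∫ y in (0:ℝ)..(1-x), 2*((x*A+y*B+(1-x-y)*C)^3)⁻¹ = (A*B*C)⁻¹ := by
  by_cases hBC : B = C
  · subst hBC
    rw [intervalIntegral.integral_congr
      (g := fun x => 2*(1-x)*((B+x*(A-B))^3)⁻¹) (fun x _ => inner_eqBC)]
    rw [lemJ2 hA hB]
    ring
  · rw [intervalIntegral.integral_congr
      (g := fun x => (B-C)⁻¹ * (((C+x*(A-C))^2)⁻¹ - ((B+x*(A-B))^2)⁻¹))
      (fun x hx => by
        rw [Set.uIcc_of_le zero_le_one] at hx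
        exact inner_neqBC hA hB hC hBC hx.1 hx.2)]
    rw [intervalIntegral.integral_const_mul]
    have i1 : IntervalIntegrable (fun x : ℝ => ((C+x*(A-C))^2)⁻¹) volume 0 1 := by
      apply ContinuousOn.intervalIntegrable
      apply ContinuousOn.inv₀ (by fun_prop)
      intro x hx
      rw [Set.uIcc_of_le zero_le_one] at hx
      exact (pow_pos (lin_pos hC hA hx.1 hx.2) 2).ne'
    have i2 : IntervalIntegrable (fun x : ℝ => ((B+x*(A-B))^2)⁻¹) volume 0 1 := by
      apply ContinuousOn.intervalIntegrable
      apply ContinuousOn.inv₀ (by fun_prop)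
      intro x hx
      rw [Set.uIcc_of_le zero_le_one] at hx
      exact (pow_pos (lin_pos hB hA hx.1 hx.2) 2).ne'
    rw [intervalIntegral.integral_sub i1 i2, lemJ hA hC, lemJ hA hB]
    have hd : B - C ≠ 0 := sub_ne_zero.mpr hBC
    field_simp

def Simp2 : Set (ℝ × ℝ) := {b : ℝ×ℝ | 0 < b.1 ∧ 0 < b.2 ∧ b.1+b.2 < 1}

lemma Simp2_open : IsOpen Simp2 := by
  have h1 : IsOpen {b : ℝ×ℝ | 0 < b.1} := isOpen_lt continuous_const continuous_fst
  have h2 : IsOpen {b : ℝ×ℝ | 0 < b.2} := isOpen_lt continuous_const continuous_snd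
  have h3 : IsOpen {b : ℝ×ℝ | b.1+b.2 < 1} :=
    isOpen_lt (continuous_fst.add continuous_snd) continuous_const
  exact h1.inter (h2.inter h3)

lemma Simp2_meas : MeasurableSet Simp2 := Simp2_open.measurableSet

lemma Simp2_vol : volume Simp2 < ⊤ := by
  have hsub : Simp2 ⊆ Set.Ioo (0:ℝ) 1 ×ˢ Set.Ioo (0:ℝ) 1 := by
    rintro ⟨x,y⟩ ⟨h1,h2,h3⟩
    exact ⟨⟨h1, by dsimp at *; linarith⟩, ⟨h2, by dsimp at *; linarith⟩⟩
  calc volume Simp2 ≤ volume (Set.Ioo (0:ℝ) 1 ×ˢ Set.Ioo (0:ℝ) 1) := measure_mono hsub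
    _ = 1 := by
        rw [Measure.volume_eq_prod, Measure.prod_prod, Real.volume_Ioo]
        norm_num
    _ < ⊤ := by norm_num

lemma simplex_iterated (f : ℝ × ℝ → ℝ) (hf : IntegrableOn f Simp2 volume) :
    ∫ b in Simp2, f b = ∫ x in (0:ℝ)..1, ∫ y in (0:ℝ)..(1-x), f (x,y) := by
  have hind : Integrable (Simp2.indicator f) volume :=
    (integrable_indicator_iff Simp2_meas).mpr hf
  have hind' : Integrable (Simp2.indicator f) (volume.prod volume) := by
    rwa [← Measure.volume_eq_prod]
  have key : ∀ x : ℝ, (∫ y, Simp2.indicator f (x,y))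
      = (Ioo (0:ℝ) 1).indicator (fun x => ∫ y in Ioo (0:ℝ) (1-x), f (x,y)) x := by
    intro x
    by_cases hx : x ∈ Ioo (0:ℝ) 1
    · rw [Set.indicator_of_mem hx]
      have hpt : ∀ y, Simp2.indicator f (x,y)
          = (Ioo (0:ℝ) (1-x)).indicator (fun y => f (x,y)) y := by
        intro y
        by_cases hy : y ∈ Ioo (0:ℝ) (1-x)
        · rw [Set.indicator_of_mem hy, Set.indicator_of_mem]
          exact ⟨hx.1, hy.1, by simp only []; linarith [hy.2]⟩
        · rw [Set.indicator_of_notMem hy, Set.indicator_of_notMem]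
          intro hmem
          exact hy ⟨hmem.2.1, by linarith [hmem.2.2]⟩
      rw [integral_congr_ae (Filter.Eventually.of_forall hpt),
        integral_indicator measurableSet_Ioo]
    · rw [Set.indicator_of_notMem hx]
      have hpt : ∀ y, Simp2.indicator f (x,y) = 0 := by
        intro y
        apply Set.indicator_of_notMem
        intro hmem
        exact hx ⟨hmem.1, by linarith [hmem.2.1, hmem.2.2]⟩
      rw [integral_congr_ae (Filter.Eventually.of_forall hpt), integral_zero]
  have houter : ∫ x in (0:ℝ)..1, ∫ y in (0:ℝ)..(1-x), f (x,y)
      = ∫ x in Ioo (0:ℝ) 1, ∫ y in Ioo (0:ℝ) (1-x), f (x,y) := by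
    rw [intervalIntegral.integral_of_le zero_le_one, integral_Ioc_eq_integral_Ioo]
    apply setIntegral_congr_fun measurableSet_Ioo
    intro x hx
    show (∫ y in (0:ℝ)..(1-x), f (x,y)) = _
    rw [intervalIntegral.integral_of_le (by linarith [hx.2] : (0:ℝ) ≤ 1-x),
      integral_Ioc_eq_integral_Ioo]
  rw [houter, ← integral_indicator Simp2_meas]
  calc ∫ b, Simp2.indicator f b
      = ∫ b, Simp2.indicator f b ∂(volume.prod volume) := by rw [← Measure.volume_eq_prod]
    _ = ∫ x, ∫ y, Simp2.indicator f (x,y) := MeasureTheory.integral_prod _ hind'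
    _ = ∫ x, (Ioo (0:ℝ) 1).indicator (fun x => ∫ y in Ioo (0:ℝ) (1-x), f (x,y)) x :=
        integral_congr_ae (Filter.Eventually.of_forall key)
    _ = ∫ x in Ioo (0:ℝ) 1, ∫ y in Ioo (0:ℝ) (1-x), f (x,y) :=
        integral_indicator measurableSet_Ioo

lemma complete_sq (M x y : ℝ) (k p q : EuclideanSpace ℝ (Fin 4)) :
    x*(‖q‖^2+M^2) + y*(‖q-k‖^2+M^2) + (1-x-y)*(‖q+p‖^2+M^2)
      = ‖q - (y•k - (1-x-y)•p)‖^2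
        + (x*y*‖k‖^2 + x*(1-x-y)*‖p‖^2 + y*(1-x-y)*‖k+p‖^2 + M^2) := by
  have e1 : ‖q-k‖^2 = ‖q‖^2 - 2*(inner ℝ q k) + ‖k‖^2 := norm_sub_sq_real q k
  have e2 : ‖q+p‖^2 = ‖q‖^2 + 2*(inner ℝ q p) + ‖p‖^2 := norm_add_sq_real q p
  have e3 : ‖k+p‖^2 = ‖k‖^2 + 2*(inner ℝ k p) + ‖p‖^2 := norm_add_sq_real k p
  have e4 : ‖q - (y•k - (1-x-y)•p)‖^2
      = ‖q‖^2 - 2*(y*(inner ℝ q k) - (1-x-y)*(inner ℝ q p))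
        + (y^2*‖k‖^2 - 2*(y*(1-x-y))*(inner ℝ k p) + (1-x-y)^2*‖p‖^2) := by
    rw [norm_sub_sq_real]
    congr 1
    · congr 1
      rw [inner_sub_right, real_inner_smul_right, real_inner_smul_right]
    · rw [norm_sub_sq_real, real_inner_smul_left, real_inner_smul_right, norm_smul, norm_smul,
        mul_pow, mul_pow, Real.norm_eq_abs, Real.norm_eq_abs, sq_abs, sq_abs]
      ring
  rw [e1, e2, e3, e4]
  ring

noncomputable def cc (k p : EuclideanSpace ℝ (Fin 4)) (b : ℝ×ℝ) : EuclideanSpace ℝ (Fin 4) :=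
  b.2 • k - (1-b.1-b.2) • p

noncomputable def DD (M : ℝ) (k p : EuclideanSpace ℝ (Fin 4)) (b : ℝ×ℝ) : ℝ :=
  b.1*b.2*‖k‖^2 + b.1*(1-b.1-b.2)*‖p‖^2 + b.2*(1-b.1-b.2)*‖k+p‖^2 + M^2

noncomputable def gg (M : ℝ) (k p : EuclideanSpace ℝ (Fin 4)) (μ : Fin 4)
    (b : ℝ×ℝ) (q : EuclideanSpace ℝ (Fin 4)) : ℝ :=
  2 * q μ * (((b.1*(‖q‖^2+M^2) + b.2*(‖q-k‖^2+M^2) + (1-b.1-b.2)*(‖q+p‖^2+M^2))^3)⁻¹)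

lemma DD_ge (M : ℝ) (k p : EuclideanSpace ℝ (Fin 4)) {b : ℝ×ℝ} (hb : b ∈ Simp2) :
    M^2 ≤ DD M k p b := by
  obtain ⟨h1, h2, h3⟩ := hb
  have e1 : 0 ≤ b.1*b.2*‖k‖^2 := by positivity
  have e2 : 0 ≤ b.1*(1-b.1-b.2)*‖p‖^2 :=
    mul_nonneg (mul_nonneg h1.le (by linarith)) (by positivity)
  have e3 : 0 ≤ b.2*(1-b.1-b.2)*‖k+p‖^2 :=
    mul_nonneg (mul_nonneg h2.le (by linarith)) (by positivity)
  unfold DD; linarith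

lemma DD_pos (M : ℝ) (hM : 0 < M) (k p : EuclideanSpace ℝ (Fin 4)) {b : ℝ×ℝ}
    (hb : b ∈ Simp2) : 0 < DD M k p b :=
  lt_of_lt_of_le (by positivity) (DD_ge M k p hb)

lemma gg_eq (M : ℝ) (k p : EuclideanSpace ℝ (Fin 4)) (μ : Fin 4) (b : ℝ×ℝ)
    (q : EuclideanSpace ℝ (Fin 4)) :
    gg M k p μ b q = 2 * q μ * (((‖q - cc k p b‖^2 + DD M k p b)^3)⁻¹) :=
  congrArg (fun t => 2 * q μ * ((t^3)⁻¹)) (complete_sq M b.1 b.2 k p q)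

lemma cc_norm_le (k p : EuclideanSpace ℝ (Fin 4)) {b : ℝ×ℝ} (hb : b ∈ Simp2) :
    ‖cc k p b‖ ≤ ‖k‖+‖p‖ := by
  obtain ⟨h1, h2, h3⟩ := hb
  have e : ‖cc k p b‖ ≤ |b.2| * ‖k‖ + |1-b.1-b.2| * ‖p‖ := by
    refine (norm_sub_le _ _).trans ?_
    rw [norm_smul, norm_smul, Real.norm_eq_abs, Real.norm_eq_abs]
  have hb2 : |b.2| ≤ 1 := by rw [abs_of_pos h2]; linarith
  have hz : |1-b.1-b.2| ≤ 1 := by rw [abs_of_nonneg (by linarith)]; linarith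
  nlinarith [norm_nonneg k, norm_nonneg p, abs_nonneg b.2, abs_nonneg (1-b.1-b.2)]

lemma gg_meas (M : ℝ) (k p : EuclideanSpace ℝ (Fin 4)) (μ : Fin 4) :
    Measurable (fun z : (ℝ×ℝ)×(EuclideanSpace ℝ (Fin 4)) => gg M k p μ z.1 z.2) := by
  have hden : Continuous (fun z : (ℝ×ℝ)×(EuclideanSpace ℝ (Fin 4)) =>
      (z.1.1*(‖z.2‖^2+M^2) + z.1.2*(‖z.2-k‖^2+M^2) + (1-z.1.1-z.1.2)*(‖z.2+p‖^2+M^2))^3) := by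
    fun_prop
  have hnum : Continuous (fun z : (ℝ×ℝ)×(EuclideanSpace ℝ (Fin 4)) => 2*z.2 μ) :=
    continuous_const.mul ((EuclideanSpace.proj μ).continuous.comp continuous_snd)
  exact hnum.measurable.mul hden.measurable.inv

noncomputable def eps0 (M : ℝ) (k p : EuclideanSpace ℝ (Fin 4)) : ℝ :=
  min 1 (M^2) / (2*(1+(‖k‖+‖p‖))^2)

lemma eps0_pos (M : ℝ) (hM : 0 < M) (k p : EuclideanSpace ℝ (Fin 4)) : 0 < eps0 M k p := by
  have h1 : (0:ℝ) < min 1 (M^2) := lt_min one_pos (by positivity)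
  unfold eps0
  positivity

lemma gg_lb (M : ℝ) (hM : 0 < M) (k p : EuclideanSpace ℝ (Fin 4)) {b : ℝ×ℝ} (hb : b ∈ Simp2)
    (q : EuclideanSpace ℝ (Fin 4)) :
    eps0 M k p * (1+‖q‖)^2 ≤ ‖q - cc k p b‖^2 + DD M k p b := by
  have hD := DD_pos M hM k p hb
  have h := aux_lb (cc k p b) hD q
  refine le_trans (mul_le_mul_of_nonneg_right ?_ (by positivity)) h
  unfold eps0
  apply div_le_div₀ (le_min zero_le_one hD.le)
    (min_le_min le_rfl (DD_ge M k p hb)) (by positivity)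
    (by nlinarith [cc_norm_le k p hb, norm_nonneg (cc k p b)])

lemma gg_bound (M : ℝ) (hM : 0 < M) (k p : EuclideanSpace ℝ (Fin 4)) (μ : Fin 4)
    {b : ℝ×ℝ} (hb : b ∈ Simp2) (q : EuclideanSpace ℝ (Fin 4)) :
    |gg M k p μ b q| ≤ 2*((eps0 M k p*eps0 M k p*eps0 M k p)⁻¹/(1+‖q‖)^5) := by
  have hε := eps0_pos M hM k p
  rw [gg_eq]
  have hsplit : 2 * q μ * (((‖q - cc k p b‖^2 + DD M k p b)^3)⁻¹)
      = 2 * (q μ / ((‖q - cc k p b‖^2 + DD M k p b)*(‖q - cc k p b‖^2 + DD M k p b)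
        *(‖q - cc k p b‖^2 + DD M k p b))) := by
    rw [div_eq_mul_inv]; ring
  rw [hsplit, abs_mul, abs_two]
  apply mul_le_mul_of_nonneg_left _ (by norm_num)
  exact decay_bound (by linarith [norm_nonneg q]) hε hε hε (gg_lb M hM k p hb q)
    (gg_lb M hM k p hb q) (gg_lb M hM k p hb q)
    ((coord_le_norm q μ).trans (by linarith [norm_nonneg q]))

lemma gg_int_q (M : ℝ) (hM : 0 < M) (k p : EuclideanSpace ℝ (Fin 4)) (μ : Fin 4)
    {b : ℝ×ℝ} (hb : b ∈ Simp2) : Integrable (gg M k p μ b) := by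
  have hD := DD_pos M hM k p hb
  have h := (integrable_coord_single (cc k p b) hD μ).const_mul 2
  apply h.congr
  filter_upwards with q
  rw [gg_eq]
  rw [div_eq_mul_inv]
  ring

lemma majorant_int (M : ℝ) (hM : 0 < M) (k p : EuclideanSpace ℝ (Fin 4)) :
    Integrable (fun q : EuclideanSpace ℝ (Fin 4) =>
      2*((eps0 M k p*eps0 M k p*eps0 M k p)⁻¹/(1+‖q‖)^5)) := by
  have hε := eps0_pos M hM k p
  apply integrable_of_decay (C := 2*(eps0 M k p*eps0 M k p*eps0 M k p)⁻¹)
  · apply Continuous.aestronglyMeasurable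
    apply continuous_const.mul
    apply Continuous.div continuous_const (by fun_prop)
    intro q; positivity
  · intro q
    have h1 : (0:ℝ) < 1+‖q‖ := by linarith [norm_nonneg q]
    rw [abs_of_nonneg (by positivity)]
    rw [mul_div_assoc]

lemma gg_prod_int (M : ℝ) (hM : 0 < M) (k p : EuclideanSpace ℝ (Fin 4)) (μ : Fin 4) :
    Integrable (Function.uncurry (gg M k p μ))
      ((volume.restrict Simp2).prod volume) := by
  have hmeas : AEStronglyMeasurable (Function.uncurry (gg M k p μ))
      ((volume.restrict Simp2).prod volume) :=
    ((gg_meas M k p μ).comp measurable_id).aestronglyMeasurable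
  rw [MeasureTheory.integrable_prod_iff hmeas]
  constructor
  · filter_upwards [ae_restrict_mem Simp2_meas] with b hb
    exact gg_int_q M hM k p μ hb
  · set K : ℝ := ∫ q : EuclideanSpace ℝ (Fin 4),
      2*((eps0 M k p*eps0 M k p*eps0 M k p)⁻¹/(1+‖q‖)^5) with hK
    apply MeasureTheory.Integrable.mono' (g := fun _ => K)
      ((integrableOn_const_iff).mpr (Or.inr Simp2_vol))
    · exact (hmeas.norm).integral_prod_right'
    · filter_upwards [ae_restrict_mem Simp2_meas] with b hb
      rw [Real.norm_eq_abs, abs_of_nonneg (integral_nonneg (fun q => norm_nonneg _))]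
      apply MeasureTheory.integral_mono (gg_int_q M hM k p μ hb).norm
        (majorant_int M hM k p)
      intro q
      show ‖gg M k p μ b q‖ ≤ _
      rw [Real.norm_eq_abs]
      exact gg_bound M hM k p μ hb q

lemma q_eval (M : ℝ) (hM : 0 < M) (k p : EuclideanSpace ℝ (Fin 4)) (μ : Fin 4)
    {b : ℝ×ℝ} (hb : b ∈ Simp2) :
    ∫ q : EuclideanSpace ℝ (Fin 4), gg M k p μ b q
      = π^2 * (cc k p b μ / DD M k p b) := by
  have hD := DD_pos M hM k p hb
  have hshift := shifted_integral (cc k p b) hD μ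
  have hcong : ∫ q : EuclideanSpace ℝ (Fin 4), gg M k p μ b q
      = ∫ q : EuclideanSpace ℝ (Fin 4), 2 * (q μ * ((‖q - cc k p b‖^2 + DD M k p b)^3)⁻¹) := by
    apply integral_congr_ae
    filter_upwards with q
    rw [gg_eq]; ring
  rw [hcong, MeasureTheory.integral_const_mul, hshift]
  field_simp

lemma b_eval (M : ℝ) (hM : 0 < M) (k p : EuclideanSpace ℝ (Fin 4)) (μ : Fin 4)
    (q : EuclideanSpace ℝ (Fin 4)) :
    ∫ b in Simp2, gg M k p μ b q
      = q μ / ((‖q‖^2+M^2) * (‖q-k‖^2+M^2) * (‖q+p‖^2+M^2)) := by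
  have hε := eps0_pos M hM k p
  have hio : IntegrableOn (fun b => gg M k p μ b q) Simp2 volume := by
    apply MeasureTheory.Integrable.mono'
      (g := fun _ => 2*((eps0 M k p*eps0 M k p*eps0 M k p)⁻¹/(1+‖q‖)^5))
      ((integrableOn_const_iff).mpr (Or.inr Simp2_vol))
    · exact ((gg_meas M k p μ).comp
        (measurable_id.prodMk measurable_const)).aestronglyMeasurable
    · filter_upwards [ae_restrict_mem Simp2_meas] with b hb
      rw [Real.norm_eq_abs]
      exact gg_bound M hM k p μ hb q
  rw [simplex_iterated _ hio]
  have hform : ∀ x y : ℝ, gg M k p μ (x,y) q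
      = q μ * (2*((x*(‖q‖^2+M^2) + y*(‖q-k‖^2+M^2) + (1-x-y)*(‖q+p‖^2+M^2))^3)⁻¹) := by
    intro x y
    show 2 * q μ * _ = _
    ring
  simp only [hform, intervalIntegral.integral_const_mul]
  have hfey := feynman (A := ‖q‖^2+M^2) (B := ‖q-k‖^2+M^2) (C := ‖q+p‖^2+M^2)
    (by positivity) (by positivity) (by positivity)
  simp only [intervalIntegral.integral_const_mul] at hfey
  rw [hfey, div_eq_mul_inv]

lemma rhs_int (M : ℝ) (hM : 0 < M) (k p : EuclideanSpace ℝ (Fin 4)) (μ : Fin 4) :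
    IntegrableOn (fun b => cc k p b μ / DD M k p b) Simp2 volume := by
  have hM2 : (0:ℝ) < M^2 := by positivity
  apply MeasureTheory.Integrable.mono' (g := fun _ => (‖k‖+‖p‖)/M^2)
    ((integrableOn_const_iff).mpr (Or.inr Simp2_vol))
  · apply Measurable.aestronglyMeasurable
    apply Measurable.div
    · have hrw : (fun b : ℝ×ℝ => cc k p b μ)
          = fun b : ℝ×ℝ => b.2*(k μ) - (1-b.1-b.2)*(p μ) := rfl
      rw [hrw]
      fun_prop
    · unfold DD
      fun_prop
  · filter_upwards [ae_restrict_mem Simp2_meas] with b hb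
    rw [Real.norm_eq_abs, abs_div, abs_of_pos (DD_pos M hM k p hb)]
    apply div_le_div₀ (by positivity)
      ((coord_le_norm _ μ).trans (cc_norm_le k p hb)) hM2 (DD_ge M k p hb)

theorem integral_three_propagators_coord (M : ℝ) (hM : 0 < M)
    (k p : EuclideanSpace ℝ (Fin 4)) (μ : Fin 4) :
    Integrable (fun q : EuclideanSpace ℝ (Fin 4) =>
      q μ / ((‖q‖ ^ 2 + M ^ 2) * (‖q - k‖ ^ 2 + M ^ 2) * (‖q + p‖ ^ 2 + M ^ 2))) ∧
    ∫ q : EuclideanSpace ℝ (Fin 4),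
        q μ / ((‖q‖ ^ 2 + M ^ 2) * (‖q - k‖ ^ 2 + M ^ 2) * (‖q + p‖ ^ 2 + M ^ 2)) =
      π ^ 2 * ∫ β₁ in (0 : ℝ)..1, ∫ β₂ in (0 : ℝ)..(1 - β₁),
        (β₂ • k - (1 - β₁ - β₂) • p) μ /
          (β₁ * β₂ * ‖k‖ ^ 2 + β₁ * (1 - β₁ - β₂) * ‖p‖ ^ 2 +
            β₂ * (1 - β₁ - β₂) * ‖k + p‖ ^ 2 + M ^ 2) := by
  refine ⟨integrable_F M hM k p μ, ?_⟩
  calc ∫ q : EuclideanSpace ℝ (Fin 4),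
        q μ / ((‖q‖ ^ 2 + M ^ 2) * (‖q - k‖ ^ 2 + M ^ 2) * (‖q + p‖ ^ 2 + M ^ 2))
      = ∫ q : EuclideanSpace ℝ (Fin 4), ∫ b in Simp2, gg M k p μ b q := by
        apply integral_congr_ae
        filter_upwards with q
        rw [b_eval M hM k p μ q]
    _ = ∫ b in Simp2, ∫ q : EuclideanSpace ℝ (Fin 4), gg M k p μ b q :=
        (MeasureTheory.integral_integral_swap (gg_prod_int M hM k p μ)).symm
    _ = ∫ b in Simp2, π^2 * (cc k p b μ / DD M k p b) := by
        apply setIntegral_congr_fun Simp2_meas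
        intro b hb
        exact q_eval M hM k p μ hb
    _ = π^2 * ∫ b in Simp2, cc k p b μ / DD M k p b := MeasureTheory.integral_const_mul _ _
    _ = π ^ 2 * ∫ β₁ in (0 : ℝ)..1, ∫ β₂ in (0 : ℝ)..(1 - β₁),
        (β₂ • k - (1 - β₁ - β₂) • p) μ /
          (β₁ * β₂ * ‖k‖ ^ 2 + β₁ * (1 - β₁ - β₂) * ‖p‖ ^ 2 +
            β₂ * (1 - β₁ - β₂) * ‖k + p‖ ^ 2 + M ^ 2) := by
        rw [simplex_iterated _ (rhs_int M hM k p μ)]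
        simp only [cc, DD]
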